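/- arXiv:2602.12467 — 4 statements merged into one kernel-verified Lean document; each statement's English description precedes it below -/
import Mathlib

section
/- Let n ≥ 1, t ∈ ℝ, 0 < τ_min ≤ τ_max. Let τ : ℝ^n × ℝ → ℝ satisfy τ_min ≤ τ(u,s) ≤ τ_max and |τ(u,s) − τ(v,s)| ≤ L_τ·‖u − v‖ for all u, v, s. Let s ↦ K(t,s) be integrable on [t−τ_max, t] with ∫_{t−τ_max}^{t} |K(t,s)| ds ≤ C_K. Let F : ℝ × ℝ^n × ℝ^n × ℝ^n → ℝ^n satisfy ‖F(s,u,v,w) − F(s,u',v',w')‖ ≤ L_F·(‖u−u'‖ + ‖v−v'‖ + ‖w−w'‖) for all arguments. Let x, y : ℝ → ℝ^n be continuous with x Lipschitz with constant L_x on [t−τ_max, t]. Then ‖F(t, x(t), x(t−τ(x(t),t)), M[x](t)) − F(t, y(t), y(t−τ(y(t),t)), M[y](t))‖ ≤ L_F·(1 + (L_x·L_τ + 1) + C_K) · sup_{s ∈ [t−τ_max, t]} ‖x(s) − y(s)‖. -/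
open MeasureTheory Set

/-- Local Lipschitz continuity of the right-hand side of the state-dependent delay
equation with distributed memory: under the stated Lipschitz and integrability
hypotheses,
`‖F(t, x t, x(t−τ(x t,t)), M[x](t)) − F(t, y t, y(t−τ(y t,t)), M[y](t))‖
  ≤ L_F·(1 + (L_x·L_τ + 1) + C_K) · sup_{s ∈ [t−τ_max,t]} ‖x s − y s‖`. -/
theorem stmt_4 (n : ℕ) (hn : 1 ≤ n) (t τmin τmax Lτ Lx CK LF : ℝ)
    (hτmin : 0 < τmin) (hττ : τmin ≤ τmax)
    (τ : EuclideanSpace ℝ (Fin n) → ℝ → ℝ)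
    (hτb : ∀ (u : EuclideanSpace ℝ (Fin n)) (s : ℝ), τ u s ∈ Icc τmin τmax)
    (hτL : ∀ (u v : EuclideanSpace ℝ (Fin n)) (s : ℝ), |τ u s - τ v s| ≤ Lτ * ‖u - v‖)
    (K : ℝ → ℝ → ℝ)
    (hK : IntervalIntegrable (fun s => K t s) volume (t - τmax) t)
    (hCK : (∫ s in (t - τmax)..t, |K t s|) ≤ CK)
    (F : ℝ → EuclideanSpace ℝ (Fin n) → EuclideanSpace ℝ (Fin n) →
      EuclideanSpace ℝ (Fin n) → EuclideanSpace ℝ (Fin n))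
    (hF : ∀ (s : ℝ) (u v w u' v' w' : EuclideanSpace ℝ (Fin n)),
      ‖F s u v w - F s u' v' w'‖ ≤ LF * (‖u - u'‖ + ‖v - v'‖ + ‖w - w'‖))
    (x y : ℝ → EuclideanSpace ℝ (Fin n)) (hx : Continuous x) (hy : Continuous y)
    (hxL : ∀ a ∈ Icc (t - τmax) t, ∀ b ∈ Icc (t - τmax) t, ‖x a - x b‖ ≤ Lx * |a - b|) :
    ‖F t (x t) (x (t - τ (x t) t)) (∫ s in (t - τmax)..t, K t s • x s) -
        F t (y t) (y (t - τ (y t) t)) (∫ s in (t - τmax)..t, K t s • y s)‖ ≤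
      LF * (1 + (Lx * Lτ + 1) + CK) * ⨆ s : Icc (t - τmax) t, ‖x s.1 - y s.1‖ := by

  have hab : t - τmax ≤ t := by nlinarith
  have hτmaxpos : 0 < τmax := lt_of_lt_of_le hτmin hττ
  set S := ⨆ s : Icc (t - τmax) t, ‖x s.1 - y s.1‖ with hSdef
  have hne : Nonempty (Icc (t - τmax) t) := ⟨⟨t, by constructor <;> linarith⟩⟩
  -- bounded above
  have hbdd : BddAbove (Set.range fun s : Icc (t - τmax) t => ‖x s.1 - y s.1‖) := by
    have hc : ContinuousOn (fun s => ‖x s - y s‖) (Icc (t - τmax) t) :=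
      ((hx.sub hy).norm).continuousOn
    obtain ⟨C, hC⟩ := (isCompact_Icc.image_of_continuousOn hc).bddAbove
    exact ⟨C, by rintro z ⟨s, rfl⟩; exact hC ⟨s.1, s.2, rfl⟩⟩
  have hS : ∀ s ∈ Icc (t - τmax) t, ‖x s - y s‖ ≤ S := fun s hs =>
    le_ciSup hbdd (⟨s, hs⟩ : Icc (t - τmax) t)
  have htmem : t ∈ Icc (t - τmax) t := ⟨by linarith, le_refl t⟩
  have hS0 : 0 ≤ S := le_trans (norm_nonneg _) (hS t htmem)
  -- nonnegativity of constants
  obtain ⟨e1, he0⟩ : ∃ e : EuclideanSpace ℝ (Fin n), ‖e‖ = 1 :=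
    ⟨EuclideanSpace.single (⟨0, hn⟩ : Fin n) (1 : ℝ), by
      rw [EuclideanSpace.norm_single]; norm_num⟩
  have he1 : ‖(0 : EuclideanSpace ℝ (Fin n)) - e1‖ = 1 := by
    rw [zero_sub, norm_neg, he0]
  have hLF : 0 ≤ LF := by
    have h := hF t 0 0 0 e1 0 0
    rw [he1] at h
    simp only [sub_self, norm_zero] at h
    have h0 := norm_nonneg (F t 0 0 0 - F t e1 0 0)
    nlinarith
  have hLτ : 0 ≤ Lτ := by
    have := hτL 0 e1 t
    rw [he1] at this
    have := abs_nonneg (τ 0 t - τ e1 t)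
    nlinarith
  have hLx : 0 ≤ Lx := by
    have h := hxL (t - τmax) ⟨le_refl _, by linarith⟩ t htmem
    have h2 : |t - τmax - t| = τmax := by rw [abs_of_nonpos (by linarith)]; ring
    rw [h2] at h
    have := norm_nonneg (x (t - τmax) - x t)
    nlinarith
  -- first slot
  have h1 : ‖x t - y t‖ ≤ S := hS t htmem
  -- delay slot
  have hτx := hτb (x t) t
  have hτy := hτb (y t) t
  have hmx : t - τ (x t) t ∈ Icc (t - τmax) t := ⟨by linarith [hτx.2], by linarith [hτx.1]⟩
  have hmy : t - τ (y t) t ∈ Icc (t - τmax) t := ⟨by linarith [hτy.2], by linarith [hτy.1]⟩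
  have h2 : ‖x (t - τ (x t) t) - y (t - τ (y t) t)‖ ≤ (Lx * Lτ + 1) * S := by
    have ha : ‖x (t - τ (x t) t) - y (t - τ (y t) t)‖ ≤
        ‖x (t - τ (x t) t) - x (t - τ (y t) t)‖ + ‖x (t - τ (y t) t) - y (t - τ (y t) t)‖ := by
      have := norm_sub_le_norm_sub_add_norm_sub (x (t - τ (x t) t)) (x (t - τ (y t) t))
        (y (t - τ (y t) t))
      linarith
    have hb : ‖x (t - τ (x t) t) - x (t - τ (y t) t)‖ ≤ Lx * |τ (x t) t - τ (y t) t| := by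
      have := hxL _ hmx _ hmy
      have heq : |t - τ (x t) t - (t - τ (y t) t)| = |τ (x t) t - τ (y t) t| := by
        rw [← abs_neg]; ring_nf
      rw [heq] at this; exact this
    have hc : |τ (x t) t - τ (y t) t| ≤ Lτ * ‖x t - y t‖ := hτL _ _ t
    have hd : ‖x (t - τ (y t) t) - y (t - τ (y t) t)‖ ≤ S := hS _ hmy
    have hb2 : ‖x (t - τ (x t) t) - x (t - τ (y t) t)‖ ≤ Lx * Lτ * S := by
      calc ‖x (t - τ (x t) t) - x (t - τ (y t) t)‖ ≤ Lx * |τ (x t) t - τ (y t) t| := hb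
        _ ≤ Lx * (Lτ * ‖x t - y t‖) := mul_le_mul_of_nonneg_left hc hLx
        _ = (Lx * Lτ) * ‖x t - y t‖ := by ring
        _ ≤ (Lx * Lτ) * S := mul_le_mul_of_nonneg_left h1 (mul_nonneg hLx hLτ)
    nlinarith
  -- integral slot
  have hKI : IntegrableOn (fun s => K t s) (Icc (t - τmax) t) volume := by
    rw [integrableOn_Icc_iff_integrableOn_Ioc]
    exact (intervalIntegrable_iff_integrableOn_Ioc_of_le hab).mp hK
  have hIx : IntervalIntegrable (fun s => K t s • x s) volume (t - τmax) t := by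
    rw [intervalIntegrable_iff_integrableOn_Ioc_of_le hab]
    exact (hKI.smul_continuousOn hx.continuousOn isCompact_Icc).mono_set Ioc_subset_Icc_self
  have hIy : IntervalIntegrable (fun s => K t s • y s) volume (t - τmax) t := by
    rw [intervalIntegrable_iff_integrableOn_Ioc_of_le hab]
    exact (hKI.smul_continuousOn hy.continuousOn isCompact_Icc).mono_set Ioc_subset_Icc_self
  have hsub : (∫ s in (t - τmax)..t, K t s • x s) - (∫ s in (t - τmax)..t, K t s • y s)
      = ∫ s in (t - τmax)..t, K t s • (x s - y s) := by
    rw [← intervalIntegral.integral_sub hIx hIy]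
    simp [smul_sub]
  have h3 : ‖(∫ s in (t - τmax)..t, K t s • x s) - ∫ s in (t - τmax)..t, K t s • y s‖
      ≤ CK * S := by
    rw [hsub]
    have hn1 : ‖∫ s in (t - τmax)..t, K t s • (x s - y s)‖ ≤
        ∫ s in (t - τmax)..t, ‖K t s • (x s - y s)‖ :=
      intervalIntegral.norm_integral_le_integral_norm hab
    have heq : ∀ s, ‖K t s • (x s - y s)‖ = |K t s| * ‖x s - y s‖ := by
      intro s; rw [norm_smul, Real.norm_eq_abs]
    have hInorm : IntervalIntegrable (fun s => |K t s| * ‖x s - y s‖) volume (t - τmax) t :=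
      hK.norm.mul_continuousOn ((hx.sub hy).norm).continuousOn
    have hIconst : IntervalIntegrable (fun s => |K t s| * S) volume (t - τmax) t :=
      hK.norm.mul_const S
    have hmono : (∫ s in (t - τmax)..t, |K t s| * ‖x s - y s‖)
        ≤ ∫ s in (t - τmax)..t, |K t s| * S := by
      apply intervalIntegral.integral_mono_on hab hInorm hIconst
      intro s hs
      exact mul_le_mul_of_nonneg_left (hS s hs) (abs_nonneg _)
    have hconst : (∫ s in (t - τmax)..t, |K t s| * S)
        = (∫ s in (t - τmax)..t, |K t s|) * S := by
      rw [← intervalIntegral.integral_mul_const]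
    calc ‖∫ s in (t - τmax)..t, K t s • (x s - y s)‖
        ≤ ∫ s in (t - τmax)..t, ‖K t s • (x s - y s)‖ := hn1
      _ = ∫ s in (t - τmax)..t, |K t s| * ‖x s - y s‖ := by simp_rw [heq]
      _ ≤ ∫ s in (t - τmax)..t, |K t s| * S := hmono
      _ = (∫ s in (t - τmax)..t, |K t s|) * S := hconst
      _ ≤ CK * S := mul_le_mul_of_nonneg_right hCK hS0
  have hmain := hF t (x t) (x (t - τ (x t) t)) (∫ s in (t - τmax)..t, K t s • x s)
    (y t) (y (t - τ (y t) t)) (∫ s in (t - τmax)..t, K t s • y s)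
  have : LF * (‖x t - y t‖ + ‖x (t - τ (x t) t) - y (t - τ (y t) t)‖ +
      ‖(∫ s in (t - τmax)..t, K t s • x s) - ∫ s in (t - τmax)..t, K t s • y s‖)
      ≤ LF * (1 + (Lx * Lτ + 1) + CK) * S := by
    nlinarith [norm_nonneg (x t - y t)]
  linarith
end

section
/- Let n ≥ 1, 0 < τ_min ≤ τ_max, T > 0, R > 0. Let τ : ℝ^n × ℝ → ℝ satisfy τ_min ≤ τ(u,s) ≤ τ_max for all u, s; let K : ℝ → ℝ be integrable on [0, τ_max] with ∫_0^{τ_max} |K(u)| du ≤ C_K; let F : ℝ × ℝ^n × ℝ^n × ℝ^n → ℝ^n be continuous and satisfy ‖F(s,u,v,w)‖ ≤ M_F whenever s ∈ [0,T], ‖u‖ ≤ R, ‖v‖ ≤ R, ‖w‖ ≤ C_K·R. Let φ : ℝ → ℝ^n be continuous with sup_{θ ∈ [−τ_max,0]} ‖φ(θ)‖ ≤ R − T·M_F. Then for every continuous x : ℝ → ℝ^n equal to φ on [−τ_max, 0] with sup_{s ∈ [−τ_max,T]} ‖x(s)‖ ≤ R, the function 𝒯x satisfies sup_{t ∈ [−τ_max,T]}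 ‖(𝒯x)(t)‖ ≤ R; that is, 𝒯 maps the closed ball of radius R into itself. -/
open MeasureTheory Set

/-- The solution operator `𝒯` of the state-dependent delay equation with distributed
memory: `(𝒯x)(t) = φ(t)` for `t ≤ 0` and
`(𝒯x)(t) = φ(0) + ∫_0^t F(s, x s, x(s−τ(x s,s)), M[x](s)) ds` for `t > 0`, where
`M[x](s) = ∫_{s−τ_max}^s K(s−u)•x(u) du`. -/
noncomputable def solOp {n : ℕ} (τmax : ℝ)
    (τ : EuclideanSpace ℝ (Fin n) → ℝ → ℝ) (K : ℝ → ℝ)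
    (F : ℝ → EuclideanSpace ℝ (Fin n) → EuclideanSpace ℝ (Fin n) →
      EuclideanSpace ℝ (Fin n) → EuclideanSpace ℝ (Fin n))
    (φ x : ℝ → EuclideanSpace ℝ (Fin n)) (t : ℝ) : EuclideanSpace ℝ (Fin n) :=
  if t ≤ 0 then φ t
  else φ 0 + ∫ s in (0 : ℝ)..t,
    F s (x s) (x (s - τ (x s) s)) (∫ u in (s - τmax)..s, K (s - u) • x u)

/-- Self-mapping property of the solution operator: if `‖F‖ ≤ M_F` on the relevant
bounded region and `sup_{[−τ_max,0]} ‖φ‖ ≤ R − T·M_F`, then for every continuous `x`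
equal to `φ` on `[−τ_max, 0]` with `sup_{[−τ_max,T]} ‖x‖ ≤ R` one has
`sup_{[−τ_max,T]} ‖𝒯x‖ ≤ R`. -/
theorem stmt_6 (n : ℕ) (hn : 1 ≤ n) (τmin τmax T R CK MF : ℝ)
    (hτmin : 0 < τmin) (hττ : τmin ≤ τmax) (hT : 0 < T) (hR : 0 < R)
    (τ : EuclideanSpace ℝ (Fin n) → ℝ → ℝ)
    (hτb : ∀ (u : EuclideanSpace ℝ (Fin n)) (s : ℝ), τ u s ∈ Icc τmin τmax)
    (K : ℝ → ℝ) (hK : IntervalIntegrable K volume 0 τmax)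
    (hCK : (∫ u in (0 : ℝ)..τmax, |K u|) ≤ CK)
    (F : ℝ → EuclideanSpace ℝ (Fin n) → EuclideanSpace ℝ (Fin n) →
      EuclideanSpace ℝ (Fin n) → EuclideanSpace ℝ (Fin n))
    (hFc : Continuous fun p : ℝ × EuclideanSpace ℝ (Fin n) × EuclideanSpace ℝ (Fin n) ×
      EuclideanSpace ℝ (Fin n) => F p.1 p.2.1 p.2.2.1 p.2.2.2)
    (hFb : ∀ (s : ℝ) (u v w : EuclideanSpace ℝ (Fin n)),
      s ∈ Icc (0 : ℝ) T → ‖u‖ ≤ R → ‖v‖ ≤ R → ‖w‖ ≤ CK * R → ‖F s u v w‖ ≤ MF)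
    (φ : ℝ → EuclideanSpace ℝ (Fin n)) (hφ : Continuous φ)
    (hφb : (⨆ θ : Icc (-τmax) (0 : ℝ), ‖φ θ.1‖) ≤ R - T * MF) :
    ∀ x : ℝ → EuclideanSpace ℝ (Fin n), Continuous x →
      (∀ θ ∈ Icc (-τmax) (0 : ℝ), x θ = φ θ) →
      (⨆ s : Icc (-τmax) T, ‖x s.1‖) ≤ R →
      (⨆ t : Icc (-τmax) T, ‖solOp τmax τ K F φ x t.1‖) ≤ R := by
  intro x hx hxφ hxR
  have hτmax : 0 < τmax := lt_of_lt_of_le hτmin hττ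
  have hCK0 : 0 ≤ CK :=
    le_trans (intervalIntegral.integral_nonneg hτmax.le fun u _ => abs_nonneg _) hCK
  have hMF : 0 ≤ MF :=
    le_trans (norm_nonneg _)
      (hFb 0 0 0 0 ⟨le_refl 0, hT.le⟩ (by simpa using hR.le) (by simpa using hR.le)
        (by simpa using mul_nonneg hCK0 hR.le))
  have hxbdd : ∀ s ∈ Icc (-τmax) T, ‖x s‖ ≤ R := by
    intro s hs
    refine le_trans ?_ hxR
    have hb : BddAbove (Set.range fun s : Icc (-τmax) T => ‖x s.1‖) := by
      refine BddAbove.mono ?_ ((isCompact_Icc (a := -τmax) (b := T)).image hx.norm).bddAbove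
      rintro _ ⟨⟨s, hs⟩, rfl⟩; exact ⟨s, hs, rfl⟩
    exact le_ciSup hb ⟨s, hs⟩
  have hφbdd : ∀ θ ∈ Icc (-τmax) (0 : ℝ), ‖φ θ‖ ≤ R - T * MF := by
    intro θ hθ
    refine le_trans ?_ hφb
    have hb : BddAbove (Set.range fun θ : Icc (-τmax) (0 : ℝ) => ‖φ θ.1‖) := by
      refine BddAbove.mono ?_ ((isCompact_Icc (a := -τmax) (b := (0:ℝ))).image hφ.norm).bddAbove
      rintro _ ⟨⟨θ, hθ⟩, rfl⟩; exact ⟨θ, hθ, rfl⟩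
    exact le_ciSup hb ⟨θ, hθ⟩
  haveI : Nonempty (Icc (-τmax) T) := ⟨⟨0, by constructor <;> linarith⟩⟩
  refine ciSup_le ?_
  rintro ⟨t, ht⟩
  simp only [solOp]
  by_cases h0 : t ≤ 0
  · rw [if_pos h0]
    have := hφbdd t ⟨ht.1, h0⟩
    nlinarith
  · rw [if_neg h0]
    push_neg at h0
    have hG : ∀ s ∈ Set.uIoc (0 : ℝ) t,
        ‖F s (x s) (x (s - τ (x s) s)) (∫ u in (s - τmax)..s, K (s - u) • x u)‖ ≤ MF := by
      intro s hs
      rw [Set.uIoc_of_le h0.le] at hs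
      obtain ⟨hs0, hst⟩ := hs
      have hsT : s ≤ T := hst.trans ht.2
      have hτs := hτb (x s) s
      apply hFb
      · exact ⟨hs0.le, hsT⟩
      · exact hxbdd s ⟨by linarith, hsT⟩
      · exact hxbdd _ ⟨by linarith [hτs.2], by linarith [hτs.1]⟩
      · -- memory bound
        have hKint : IntervalIntegrable (fun u => |K (s - u)| * R) volume (s - τmax) s := by
          have h1 := (hK.abs.comp_sub_left s).symm
          simpa using h1.mul_const R
        have hle : ∀ᵐ u ∂volume.restrict (Set.uIoc (s - τmax) s),
            ‖K (s - u) • x u‖ ≤ |K (s - u)| * R := by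
          refine (ae_restrict_mem measurableSet_uIoc).mono fun u hu => ?_
          rw [Set.uIoc_of_le (by linarith : s - τmax ≤ s)] at hu
          rw [norm_smul, Real.norm_eq_abs]
          exact mul_le_mul_of_nonneg_left
            (hxbdd u ⟨by linarith [hu.1], hu.2.trans hsT⟩) (abs_nonneg _)
        calc ‖∫ u in (s - τmax)..s, K (s - u) • x u‖
            ≤ |∫ u in (s - τmax)..s, |K (s - u)| * R| :=
              intervalIntegral.norm_integral_le_abs_of_norm_le hle hKint
          _ = |(∫ u in (s - τmax)..s, |K (s - u)|) * R| := by
              rw [intervalIntegral.integral_mul_const]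
          _ = |(∫ v in (0 : ℝ)..τmax, |K v|) * R| := by
              rw [intervalIntegral.integral_comp_sub_left (fun v => |K v|) s]
              norm_num
          _ ≤ CK * R := by
              rw [abs_of_nonneg (mul_nonneg
                (intervalIntegral.integral_nonneg hτmax.le fun u _ => abs_nonneg _) hR.le)]
              exact mul_le_mul_of_nonneg_right hCK hR.le
    have hnorm := intervalIntegral.norm_integral_le_of_norm_le_const hG
    have hφ0 := hφbdd 0 ⟨by linarith, le_refl 0⟩
    calc ‖φ 0 + ∫ s in (0 : ℝ)..t,
          F s (x s) (x (s - τ (x s) s)) (∫ u in (s - τmax)..s, K (s - u) • x u)‖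
        ≤ ‖φ 0‖ + ‖∫ s in (0 : ℝ)..t,
          F s (x s) (x (s - τ (x s) s)) (∫ u in (s - τmax)..s, K (s - u) • x u)‖ :=
          norm_add_le _ _
      _ ≤ (R - T * MF) + MF * |t - 0| := add_le_add hφ0 hnorm
      _ ≤ R := by
          rw [sub_zero, abs_of_nonneg h0.le]
          nlinarith [ht.2]
end

section
/- Local well-posedness (Theorem 2.1, integral form). Let n ≥ 1 and 0 < τ_min ≤ τ_max. Let τ : ℝ^n × ℝ → ℝ be continuous with τ_min ≤ τ(u,s) ≤ τ_max and |τ(u,s) − τ(v,s)| ≤ L_τ·‖u − v‖ for all u, v, s. Let K : ℝ → ℝ be integrable on [0, τ_max]. Let F : ℝ × ℝ^n × ℝ^n × ℝ^n → ℝ^n be continuous and satisfy ‖F(s,u,v,w) − F(s,u',v',w')‖ ≤ L_F·(‖u−u'‖ + ‖v−v'‖ + ‖w−w'‖) for all arguments. Let φ : [−τ_max, 0] → ℝ^n be Lipschitz continuous. Then there exists T₀ > 0 and a unique continuous function x : [−τ_max, T₀] → ℝ^n such that x(θ) = φ(θ) for θ ∈ [−τ_max, 0] and x(t) = φ(0)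 + ∫_0^t F(s, x(s), x(s−τ(x(s),s)), ∫_{s−τ_max}^{s} K(s−u)·x(u) du) ds for all t ∈ [0, T₀]. -/
open MeasureTheory Set

section Aux

variable {n : ℕ}

private noncomputable abbrev Esp (n : ℕ) := EuclideanSpace ℝ (Fin n)

private lemma aux_smul_II {c : ℝ} (hc : 0 ≤ c) {K : ℝ → ℝ}
    (hK : IntervalIntegrable K volume 0 c) {z : ℝ → Esp n} (hz : Continuous z) :
    IntervalIntegrable (fun v => K v • z v) volume 0 c := by
  rw [intervalIntegrable_iff_integrableOn_Ioc_of_le hc] at hK ⊢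
  have h1 : IntegrableOn K (Icc 0 c) volume := (integrableOn_Icc_iff_integrableOn_Ioc (by simp)).2 hK
  exact (h1.smul_continuousOn hz.continuousOn isCompact_Icc).mono_set Ioc_subset_Icc_self

private lemma aux_mem_cont {c : ℝ} (hc : 0 ≤ c) {K : ℝ → ℝ}
    (hK : IntervalIntegrable K volume 0 c) {z : ℝ → Esp n} (hz : Continuous z)
    {B : ℝ} (hB : ∀ t, ‖z t‖ ≤ B) :
    Continuous fun s => ∫ v in (0:ℝ)..c, K v • z (s - v) := by
  apply intervalIntegral.continuous_of_dominated_interval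
    (bound := fun v => |K v| * B)
  · intro s
    have hKm : AEStronglyMeasurable K (volume.restrict (uIoc (0:ℝ) c)) := by
      rw [uIoc_of_le hc]; exact hK.1.aestronglyMeasurable
    exact hKm.smul ((hz.comp (continuous_const.sub continuous_id)).aestronglyMeasurable)
  · intro s
    filter_upwards with v _
    rw [norm_smul, Real.norm_eq_abs]
    exact mul_le_mul_of_nonneg_left (hB _) (abs_nonneg _)
  · have := hK.norm.mul_const B
    simpa [Real.norm_eq_abs] using this
  · filter_upwards with v _
    exact (continuous_const (y := K v)).smul (hz.comp (continuous_id.sub continuous_const) :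
      Continuous fun x => z (x - v))

private lemma aux_mem_diff {c : ℝ} (hc : 0 ≤ c) {K : ℝ → ℝ}
    (hK : IntervalIntegrable K volume 0 c) {z w : ℝ → Esp n}
    (hz : Continuous z) (hw : Continuous w) {D : ℝ} (hD : ∀ t, ‖z t - w t‖ ≤ D) (s : ℝ) :
    ‖(∫ v in (0:ℝ)..c, K v • z (s - v)) - ∫ v in (0:ℝ)..c, K v • w (s - v)‖
      ≤ (∫ v in (0:ℝ)..c, |K v|) * D := by
  have hzc : Continuous fun v => z (s - v) := hz.comp (continuous_const.sub continuous_id)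
  have hwc : Continuous fun v => w (s - v) := hw.comp (continuous_const.sub continuous_id)
  have hiz := aux_smul_II hc hK hzc
  have hiw := aux_smul_II hc hK hwc
  rw [← intervalIntegral.integral_sub hiz hiw]
  have hdiff : IntervalIntegrable (fun v => K v • (z (s - v) - w (s - v))) volume 0 c :=
    aux_smul_II hc hK (hzc.sub hwc)
  calc ‖∫ v in (0:ℝ)..c, (K v • z (s - v) - K v • w (s - v))‖
      = ‖∫ v in (0:ℝ)..c, K v • (z (s - v) - w (s - v))‖ := by
        congr 1; apply intervalIntegral.integral_congr; intro v _; simp [smul_sub]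
    _ ≤ ∫ v in (0:ℝ)..c, ‖K v • (z (s - v) - w (s - v))‖ :=
        intervalIntegral.norm_integral_le_integral_norm hc
    _ ≤ ∫ v in (0:ℝ)..c, |K v| * D := by
        apply intervalIntegral.integral_mono_on hc hdiff.norm
        · simpa [Real.norm_eq_abs] using hK.norm.mul_const D
        · intro v _
          rw [norm_smul, Real.norm_eq_abs]
          exact mul_le_mul_of_nonneg_left (hD _) (abs_nonneg _)
    _ = (∫ v in (0:ℝ)..c, |K v|) * D := intervalIntegral.integral_mul_const _ _


variable {τmax T₀ : ℝ}

private noncomputable def phit (τmax : ℝ) (h : -τmax ≤ 0) (φ : ℝ → Esp n) : ℝ → Esp n :=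
  fun t => φ (projIcc (-τmax) 0 h t)

private lemma phit_eq (h : -τmax ≤ 0) (φ : ℝ → Esp n) {t : ℝ} (ht : t ∈ Icc (-τmax) 0) :
    phit τmax h φ t = φ t := by
  rw [phit, projIcc_of_mem h ht]

private lemma phit_cont (h : -τmax ≤ 0) {φ : ℝ → Esp n}
    (hφ : ContinuousOn φ (Icc (-τmax) 0)) : Continuous (phit τmax h φ) :=
  hφ.restrict.comp continuous_projIcc

private lemma phit_bound (h : -τmax ≤ 0) {φ : ℝ → Esp n}
    (hφ : ContinuousOn φ (Icc (-τmax) 0)) : ∃ B, ∀ t, ‖phit τmax h φ t‖ ≤ B := by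
  obtain ⟨B, hB⟩ := isCompact_Icc.exists_bound_of_continuousOn hφ
  exact ⟨B, fun t => hB _ (projIcc (-τmax) 0 h t).2⟩

private noncomputable def xbar (h : -τmax ≤ 0) (hT : 0 ≤ T₀) (φ : ℝ → Esp n)
    (f : C(Icc (0:ℝ) T₀, Esp n)) : ℝ → Esp n :=
  fun t => if t ≤ 0 then phit τmax h φ t else f (projIcc 0 T₀ hT t)

private lemma xbar_neg (h : -τmax ≤ 0) (hT : 0 ≤ T₀) (φ : ℝ → Esp n)
    (f : C(Icc (0:ℝ) T₀, Esp n)) {t : ℝ} (ht : t ≤ 0) :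
    xbar h hT φ f t = phit τmax h φ t := if_pos ht

private lemma xbar_mem (h : -τmax ≤ 0) (hT : 0 ≤ T₀) (φ : ℝ → Esp n)
    (f : C(Icc (0:ℝ) T₀, Esp n)) (hf0 : f ⟨0, ⟨le_refl 0, hT⟩⟩ = φ 0)
    {t : ℝ} (ht : t ∈ Icc (0:ℝ) T₀) :
    xbar h hT φ f t = f ⟨t, ht⟩ := by
  rcases le_or_gt t 0 with h0 | h0
  · have ht0 : t = 0 := le_antisymm h0 ht.1
    subst ht0
    rw [xbar_neg h hT φ f le_rfl, phit_eq h φ ⟨h, le_rfl⟩, hf0]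
  · rw [xbar, if_neg (not_le.2 h0), projIcc_of_mem hT ht]

private lemma xbar_cont (h : -τmax ≤ 0) (hT : 0 ≤ T₀) {φ : ℝ → Esp n}
    (hφ : ContinuousOn φ (Icc (-τmax) 0))
    (f : C(Icc (0:ℝ) T₀, Esp n)) (hf0 : f ⟨0, ⟨le_refl 0, hT⟩⟩ = φ 0) :
    Continuous (xbar h hT φ f) := by
  apply Continuous.if_le (phit_cont h hφ) (f.continuous.comp continuous_projIcc)
    continuous_id continuous_const
  intro t ht
  subst ht
  rw [phit_eq h φ ⟨h, le_rfl⟩]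
  have : projIcc (0:ℝ) T₀ hT 0 = ⟨0, ⟨le_refl 0, hT⟩⟩ := projIcc_of_mem hT ⟨le_refl 0, hT⟩
  show φ 0 = f (projIcc 0 T₀ hT 0)
  rw [this, hf0]

private lemma xbar_bound (h : -τmax ≤ 0) (hT : 0 ≤ T₀) {φ : ℝ → Esp n}
    (hφ : ContinuousOn φ (Icc (-τmax) 0)) (f : C(Icc (0:ℝ) T₀, Esp n)) :
    ∃ B, ∀ t, ‖xbar h hT φ f t‖ ≤ B := by
  obtain ⟨B, hB⟩ := phit_bound h hφ
  refine ⟨max B ‖f‖, fun t => ?_⟩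
  rw [xbar]
  split_ifs
  · exact le_max_of_le_left (hB _)
  · exact le_max_of_le_right (f.norm_coe_le_norm _)

private lemma xbar_dist (h : -τmax ≤ 0) (hT : 0 ≤ T₀) (φ : ℝ → Esp n)
    (f g : C(Icc (0:ℝ) T₀, Esp n)) (t : ℝ) :
    ‖xbar h hT φ f t - xbar h hT φ g t‖ ≤ dist f g := by
  rw [xbar, xbar]
  split_ifs
  · simpa using dist_nonneg
  · rw [← dist_eq_norm]
    exact ContinuousMap.dist_apply_le_dist _


private lemma phit_lip (h : -τmax ≤ 0) {φ : ℝ → Esp n} {Lφ : NNReal}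
    (hLφ : LipschitzOnWith Lφ φ (Icc (-τmax) 0)) : LipschitzWith Lφ (phit τmax h φ) := by
  have := hLφ.to_restrict.comp (LipschitzWith.projIcc h)
  rw [mul_one] at this
  exact this

variable {K : ℝ → ℝ} {τ : Esp n → ℝ → ℝ}
  {F : ℝ → Esp n → Esp n → Esp n → Esp n} {φ : ℝ → Esp n}

private noncomputable def Gfun (h : -τmax ≤ 0) (hT : 0 ≤ T₀) (K : ℝ → ℝ)
    (τ : Esp n → ℝ → ℝ) (F : ℝ → Esp n → Esp n → Esp n → Esp n) (φ : ℝ → Esp n)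
    (f : C(Icc (0:ℝ) T₀, Esp n)) : ℝ → Esp n :=
  fun s => F s (xbar h hT φ f s) (phit τmax h φ (s - τ (xbar h hT φ f s) s))
    (∫ v in (0:ℝ)..τmax, K v • xbar h hT φ f (s - v))

private lemma Gfun_cont (h : -τmax ≤ 0) (hT : 0 ≤ T₀) (h0c : 0 ≤ τmax)
    (hK : IntervalIntegrable K volume 0 τmax)
    (hτc : Continuous fun p : Esp n × ℝ => τ p.1 p.2)
    (hFc : Continuous fun p : ℝ × Esp n × Esp n × Esp n => F p.1 p.2.1 p.2.2.1 p.2.2.2)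
    (hφc : ContinuousOn φ (Icc (-τmax) 0))
    (f : C(Icc (0:ℝ) T₀, Esp n)) (hf0 : f ⟨0, ⟨le_refl 0, hT⟩⟩ = φ 0) :
    Continuous (Gfun h hT K τ F φ f) := by
  have hx := xbar_cont h hT hφc f hf0
  obtain ⟨B, hB⟩ := xbar_bound h hT hφc f
  have hM : Continuous fun s => ∫ v in (0:ℝ)..τmax, K v • xbar h hT φ f (s - v) :=
    aux_mem_cont h0c hK hx hB
  have hdel : Continuous fun s => phit τmax h φ (s - τ (xbar h hT φ f s) s) :=
    (phit_cont h hφc).comp (continuous_id.sub (hτc.comp (hx.prodMk continuous_id)))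
  exact hFc.comp (continuous_id.prodMk (hx.prodMk (hdel.prodMk hM)))

private lemma Gfun_diff {Lτ LF : ℝ} {Lφ : NNReal} (h : -τmax ≤ 0) (hT : 0 ≤ T₀)
    (h0c : 0 ≤ τmax) (hK : IntervalIntegrable K volume 0 τmax)
    (hτL : ∀ (u v : Esp n) (s : ℝ), |τ u s - τ v s| ≤ Lτ * ‖u - v‖)
    (hFL : ∀ (s : ℝ) (u v w u' v' w' : Esp n),
      ‖F s u v w - F s u' v' w'‖ ≤ LF * (‖u - u'‖ + ‖v - v'‖ + ‖w - w'‖))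
    (hLφ : LipschitzOnWith Lφ φ (Icc (-τmax) 0))
    (hLτ0 : 0 ≤ Lτ) (hLF0 : 0 ≤ LF)
    (f g : C(Icc (0:ℝ) T₀, Esp n))
    (hf0 : f ⟨0, ⟨le_refl 0, hT⟩⟩ = φ 0) (hg0 : g ⟨0, ⟨le_refl 0, hT⟩⟩ = φ 0) (s : ℝ) :
    ‖Gfun h hT K τ F φ f s - Gfun h hT K τ F φ g s‖
      ≤ (LF * (1 + (Lφ : ℝ) * Lτ + ∫ v in (0:ℝ)..τmax, |K v|)) * dist f g := by
  have hφc : ContinuousOn φ (Icc (-τmax) 0) := hLφ.continuousOn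
  have hxf := xbar_cont h hT hφc f hf0
  have hxg := xbar_cont h hT hφc g hg0
  set D := dist f g with hD
  have hD0 : 0 ≤ D := dist_nonneg
  have h1 : ‖xbar h hT φ f s - xbar h hT φ g s‖ ≤ D := xbar_dist h hT φ f g s
  have h2 : ‖phit τmax h φ (s - τ (xbar h hT φ f s) s)
      - phit τmax h φ (s - τ (xbar h hT φ g s) s)‖ ≤ (Lφ : ℝ) * (Lτ * D) := by
    have hlip := (phit_lip h hLφ).dist_le_mul (s - τ (xbar h hT φ f s) s)
      (s - τ (xbar h hT φ g s) s)
    rw [dist_eq_norm] at hlip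
    refine hlip.trans ?_
    have harg : dist (s - τ (xbar h hT φ f s) s) (s - τ (xbar h hT φ g s) s)
        = |τ (xbar h hT φ f s) s - τ (xbar h hT φ g s) s| := by
      rw [Real.dist_eq]
      have : s - τ (xbar h hT φ f s) s - (s - τ (xbar h hT φ g s) s)
          = -(τ (xbar h hT φ f s) s - τ (xbar h hT φ g s) s) := by ring
      rw [this, abs_neg]
    rw [harg]
    have := (hτL (xbar h hT φ f s) (xbar h hT φ g s) s).trans
      (mul_le_mul_of_nonneg_left h1 hLτ0)
    exact mul_le_mul_of_nonneg_left this Lφ.coe_nonneg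
  have h3 : ‖(∫ v in (0:ℝ)..τmax, K v • xbar h hT φ f (s - v))
      - ∫ v in (0:ℝ)..τmax, K v • xbar h hT φ g (s - v)‖
      ≤ (∫ v in (0:ℝ)..τmax, |K v|) * D :=
    aux_mem_diff h0c hK hxf hxg (fun t => xbar_dist h hT φ f g t) s
  calc ‖Gfun h hT K τ F φ f s - Gfun h hT K τ F φ g s‖
      ≤ LF * (‖xbar h hT φ f s - xbar h hT φ g s‖
        + ‖phit τmax h φ (s - τ (xbar h hT φ f s) s)
            - phit τmax h φ (s - τ (xbar h hT φ g s) s)‖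
        + ‖(∫ v in (0:ℝ)..τmax, K v • xbar h hT φ f (s - v))
            - ∫ v in (0:ℝ)..τmax, K v • xbar h hT φ g (s - v)‖) := hFL s _ _ _ _ _ _
    _ ≤ LF * (D + (Lφ : ℝ) * (Lτ * D) + (∫ v in (0:ℝ)..τmax, |K v|) * D) := by
        apply mul_le_mul_of_nonneg_left _ hLF0
        linarith
    _ = (LF * (1 + (Lφ : ℝ) * Lτ + ∫ v in (0:ℝ)..τmax, |K v|)) * D := by ring

private noncomputable def Pmap (h : -τmax ≤ 0) (hT : 0 ≤ T₀) (h0c : 0 ≤ τmax)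
    (hK : IntervalIntegrable K volume 0 τmax)
    (hτc : Continuous fun p : Esp n × ℝ => τ p.1 p.2)
    (hFc : Continuous fun p : ℝ × Esp n × Esp n × Esp n => F p.1 p.2.1 p.2.2.1 p.2.2.2)
    (hφc : ContinuousOn φ (Icc (-τmax) 0))
    (f : C(Icc (0:ℝ) T₀, Esp n)) (hf0 : f ⟨0, ⟨le_refl 0, hT⟩⟩ = φ 0) :
    C(Icc (0:ℝ) T₀, Esp n) :=
  ⟨fun t => φ 0 + ∫ s in (0:ℝ)..(t:ℝ), Gfun h hT K τ F φ f s, by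
    have hG := Gfun_cont h hT h0c hK hτc hFc hφc f hf0
    exact continuous_const.add ((intervalIntegral.continuous_primitive
      (fun a b => hG.intervalIntegrable a b) 0).comp continuous_subtype_val)⟩

private lemma Pmap_apply (h : -τmax ≤ 0) (hT : 0 ≤ T₀) (h0c : 0 ≤ τmax)
    (hK : IntervalIntegrable K volume 0 τmax)
    (hτc : Continuous fun p : Esp n × ℝ => τ p.1 p.2)
    (hFc : Continuous fun p : ℝ × Esp n × Esp n × Esp n => F p.1 p.2.1 p.2.2.1 p.2.2.2)
    (hφc : ContinuousOn φ (Icc (-τmax) 0))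
    (f : C(Icc (0:ℝ) T₀, Esp n)) (hf0 : f ⟨0, ⟨le_refl 0, hT⟩⟩ = φ 0)
    (t : Icc (0:ℝ) T₀) :
    Pmap h hT h0c hK hτc hFc hφc f hf0 t
      = φ 0 + ∫ s in (0:ℝ)..(t:ℝ), Gfun h hT K τ F φ f s := rfl


private lemma Pmap_dist {Lτ LF : ℝ} {Lφ : NNReal} (h : -τmax ≤ 0) (hT : 0 ≤ T₀)
    (h0c : 0 ≤ τmax) (hK : IntervalIntegrable K volume 0 τmax)
    (hτc : Continuous fun p : Esp n × ℝ => τ p.1 p.2)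
    (hτL : ∀ (u v : Esp n) (s : ℝ), |τ u s - τ v s| ≤ Lτ * ‖u - v‖)
    (hFc : Continuous fun p : ℝ × Esp n × Esp n × Esp n => F p.1 p.2.1 p.2.2.1 p.2.2.2)
    (hFL : ∀ (s : ℝ) (u v w u' v' w' : Esp n),
      ‖F s u v w - F s u' v' w'‖ ≤ LF * (‖u - u'‖ + ‖v - v'‖ + ‖w - w'‖))
    (hLφ : LipschitzOnWith Lφ φ (Icc (-τmax) 0))
    (hLτ0 : 0 ≤ Lτ) (hLF0 : 0 ≤ LF)
    (f g : C(Icc (0:ℝ) T₀, Esp n))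
    (hf0 : f ⟨0, ⟨le_refl 0, hT⟩⟩ = φ 0) (hg0 : g ⟨0, ⟨le_refl 0, hT⟩⟩ = φ 0) :
    dist (Pmap h hT h0c hK hτc hFc hLφ.continuousOn f hf0)
        (Pmap h hT h0c hK hτc hFc hLφ.continuousOn g hg0)
      ≤ (T₀ * (LF * (1 + (Lφ : ℝ) * Lτ + ∫ v in (0:ℝ)..τmax, |K v|))) * dist f g := by
  have hφc : ContinuousOn φ (Icc (-τmax) 0) := hLφ.continuousOn
  set C := LF * (1 + (Lφ : ℝ) * Lτ + ∫ v in (0:ℝ)..τmax, |K v|) with hC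
  have hκ0 : 0 ≤ ∫ v in (0:ℝ)..τmax, |K v| :=
    intervalIntegral.integral_nonneg h0c (fun v _ => abs_nonneg _)
  have hC0 : 0 ≤ C := by
    apply mul_nonneg hLF0
    have := mul_nonneg Lφ.coe_nonneg hLτ0
    linarith
  rw [ContinuousMap.dist_le (by positivity)]
  intro t
  rw [Pmap_apply, Pmap_apply, dist_eq_norm]
  have hint : (φ 0 + ∫ s in (0:ℝ)..(t:ℝ), Gfun h hT K τ F φ f s)
      - (φ 0 + ∫ s in (0:ℝ)..(t:ℝ), Gfun h hT K τ F φ g s)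
      = ∫ s in (0:ℝ)..(t:ℝ), (Gfun h hT K τ F φ f s - Gfun h hT K τ F φ g s) := by
    rw [intervalIntegral.integral_sub
      ((Gfun_cont h hT h0c hK hτc hFc hφc f hf0).intervalIntegrable _ _)
      ((Gfun_cont h hT h0c hK hτc hFc hφc g hg0).intervalIntegrable _ _)]
    abel
  rw [hint]
  have hbd : ∀ s ∈ uIoc (0:ℝ) (t:ℝ),
      ‖Gfun h hT K τ F φ f s - Gfun h hT K τ F φ g s‖ ≤ C * dist f g :=
    fun s _ => Gfun_diff h hT h0c hK hτL hFL hLφ hLτ0 hLF0 f g hf0 hg0 s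
  refine (intervalIntegral.norm_integral_le_of_norm_le_const hbd).trans ?_
  have ht : |(t:ℝ) - 0| ≤ T₀ := by
    rw [sub_zero, abs_of_nonneg t.2.1]
    exact t.2.2
  calc C * dist f g * |(t:ℝ) - 0| ≤ C * dist f g * T₀ :=
        mul_le_mul_of_nonneg_left ht (by positivity)
    _ = T₀ * C * dist f g := by ring

end Aux


/-- `x` is a solution on `[−τ_max, T₀]` of the integral form of the state-dependent
delay differential equation with distributed memory, with initial history `φ`:
`x` is continuous on `[−τ_max, T₀]`, equals `φ` on `[−τ_max, 0]`, and satisfies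
`x(t) = φ(0) + ∫_0^t F(s, x s, x(s−τ(x s,s)), ∫_{s−τ_max}^s K(s−u)•x(u) du) ds`
for all `t ∈ [0, T₀]`. -/
def IsIntSol {n : ℕ} (τmax : ℝ)
    (τ : EuclideanSpace ℝ (Fin n) → ℝ → ℝ) (K : ℝ → ℝ)
    (F : ℝ → EuclideanSpace ℝ (Fin n) → EuclideanSpace ℝ (Fin n) →
      EuclideanSpace ℝ (Fin n) → EuclideanSpace ℝ (Fin n))
    (φ : ℝ → EuclideanSpace ℝ (Fin n)) (T₀ : ℝ)
    (x : ℝ → EuclideanSpace ℝ (Fin n)) : Prop :=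
  ContinuousOn x (Icc (-τmax) T₀) ∧
  (∀ θ ∈ Icc (-τmax) (0 : ℝ), x θ = φ θ) ∧
  ∀ t ∈ Icc (0 : ℝ) T₀,
    x t = φ 0 + ∫ s in (0 : ℝ)..t,
      F s (x s) (x (s - τ (x s) s)) (∫ u in (s - τmax)..s, K (s - u) • x u)

/-- Local well-posedness (Theorem 2.1, integral form): under the assumptions
(A1)–(A3), for every Lipschitz initial history `φ` there exist `T₀ > 0` and a unique
continuous solution of the integral equation on `[−τ_max, T₀]`. -/
theorem stmt_7 (n : ℕ) (hn : 1 ≤ n) (τmin τmax Lτ LF : ℝ)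
    (hτmin : 0 < τmin) (hττ : τmin ≤ τmax)
    (τ : EuclideanSpace ℝ (Fin n) → ℝ → ℝ)
    (hτc : Continuous fun p : EuclideanSpace ℝ (Fin n) × ℝ => τ p.1 p.2)
    (hτb : ∀ (u : EuclideanSpace ℝ (Fin n)) (s : ℝ), τ u s ∈ Icc τmin τmax)
    (hτL : ∀ (u v : EuclideanSpace ℝ (Fin n)) (s : ℝ), |τ u s - τ v s| ≤ Lτ * ‖u - v‖)
    (K : ℝ → ℝ) (hK : IntervalIntegrable K volume 0 τmax)
    (F : ℝ → EuclideanSpace ℝ (Fin n) → EuclideanSpace ℝ (Fin n) →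
      EuclideanSpace ℝ (Fin n) → EuclideanSpace ℝ (Fin n))
    (hFc : Continuous fun p : ℝ × EuclideanSpace ℝ (Fin n) × EuclideanSpace ℝ (Fin n) ×
      EuclideanSpace ℝ (Fin n) => F p.1 p.2.1 p.2.2.1 p.2.2.2)
    (hFL : ∀ (s : ℝ) (u v w u' v' w' : EuclideanSpace ℝ (Fin n)),
      ‖F s u v w - F s u' v' w'‖ ≤ LF * (‖u - u'‖ + ‖v - v'‖ + ‖w - w'‖))
    (φ : ℝ → EuclideanSpace ℝ (Fin n))
    (hφ : ∃ Lφ : NNReal, LipschitzOnWith Lφ φ (Icc (-τmax) 0)) :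
    ∃ T₀ > 0,
      (∃ x : ℝ → EuclideanSpace ℝ (Fin n), IsIntSol τmax τ K F φ T₀ x) ∧
      ∀ x y : ℝ → EuclideanSpace ℝ (Fin n),
        IsIntSol τmax τ K F φ T₀ x → IsIntSol τmax τ K F φ T₀ y →
        EqOn x y (Icc (-τmax) T₀) := by
  classical
  obtain ⟨Lφ, hLφ⟩ := hφ
  have h0c : (0:ℝ) ≤ τmax := hτmin.le.trans hττ
  have h : -τmax ≤ 0 := neg_nonpos.2 h0c
  have hφc : ContinuousOn φ (Icc (-τmax) 0) := hLφ.continuousOn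
  -- nonnegativity of the Lipschitz constants
  have hone : ‖EuclideanSpace.single (⟨0, hn⟩ : Fin n) (1:ℝ) - 0‖ = 1 := by
    simp [EuclideanSpace.norm_single]
  have hLτ0 : 0 ≤ Lτ := by
    have h1 := hτL (EuclideanSpace.single (⟨0, hn⟩ : Fin n) (1:ℝ)) 0 0
    rw [hone, mul_one] at h1
    exact (abs_nonneg _).trans h1
  have hLF0 : 0 ≤ LF := by
    have h1 := hFL 0 (EuclideanSpace.single (⟨0, hn⟩ : Fin n) (1:ℝ)) 0 0 0 0 0
    rw [hone] at h1
    simp only [sub_zero, sub_self, norm_zero, add_zero] at h1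
    rw [mul_one] at h1
    exact (norm_nonneg _).trans h1
  set κ := ∫ v in (0:ℝ)..τmax, |K v| with hκdef
  have hκ0 : 0 ≤ κ := intervalIntegral.integral_nonneg h0c (fun v _ => abs_nonneg _)
  set C := LF * (1 + (Lφ : ℝ) * Lτ + κ) with hCdef
  have hC0 : 0 ≤ C := by
    apply mul_nonneg hLF0
    have := mul_nonneg Lφ.coe_nonneg hLτ0
    linarith
  set T0 := min τmin (1 / (2 * (C + 1))) with hT0def
  have hT0pos : 0 < T0 := lt_min hτmin (by positivity)
  have hT : (0:ℝ) ≤ T0 := hT0pos.le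
  have hTτmin : T0 ≤ τmin := min_le_left _ _
  have hTC : T0 * C ≤ 1 / 2 := by
    have h1 : T0 * (2 * (C + 1)) ≤ 1 := by
      calc T0 * (2 * (C + 1)) ≤ (1 / (2 * (C + 1))) * (2 * (C + 1)) :=
            mul_le_mul_of_nonneg_right (min_le_right _ _) (by positivity)
        _ = 1 := by field_simp
    nlinarith
  -- the complete space of candidate restrictions
  have hSclosed : IsClosed {f : C(Icc (0:ℝ) T0, Esp n) | f ⟨0, ⟨le_refl 0, hT⟩⟩ = φ 0} :=
    isClosed_eq (continuous_eval_const _) continuous_const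
  haveI : CompleteSpace {f : C(Icc (0:ℝ) T0, Esp n) | f ⟨0, ⟨le_refl 0, hT⟩⟩ = φ 0} :=
    hSclosed.completeSpace_coe
  set S := {f : C(Icc (0:ℝ) T0, Esp n) | f ⟨0, ⟨le_refl 0, hT⟩⟩ = φ 0} with hSdef
  -- the Picard operator
  have Pmem : ∀ f : S, Pmap h hT h0c hK hτc hFc hφc f.1 f.2 ∈ S := by
    intro f
    show Pmap h hT h0c hK hτc hFc hφc f.1 f.2 ⟨0, ⟨le_refl 0, hT⟩⟩ = φ 0
    rw [Pmap_apply]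
    simp
  set P : S → S := fun f => ⟨Pmap h hT h0c hK hτc hFc hφc f.1 f.2, Pmem f⟩ with hPdef
  have hcontr : ContractingWith (1/2 : NNReal) P := by
    constructor
    · rw [← NNReal.coe_lt_coe]; norm_num
    · apply LipschitzWith.of_dist_le_mul
      intro fS gS
      have hd := Pmap_dist h hT h0c hK hτc hτL hFc hFL hLφ hLτ0 hLF0 fS.1 gS.1 fS.2 gS.2
      rw [Subtype.dist_eq fS gS, Subtype.dist_eq (P fS) (P gS)]
      refine le_trans hd ?_
      have hhalf : ((1/2 : NNReal) : ℝ) = 1/2 := by norm_num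
      rw [hhalf]
      exact mul_le_mul_of_nonneg_right hTC dist_nonneg
  -- fixed point
  have hne : S.Nonempty := ⟨ContinuousMap.const _ (φ 0), rfl⟩
  obtain ⟨f₀, hf₀⟩ := hne
  obtain ⟨fS, hfix, -⟩ := hcontr.exists_fixedPoint (⟨f₀, hf₀⟩ : S) (edist_ne_top _ _)
  -- history property of xbar
  have hhist : ∀ (f : C(Icc (0:ℝ) T0, Esp n)), ∀ θ ∈ Icc (-τmax) (0:ℝ),
      xbar h hT φ f θ = φ θ := by
    intro f θ hθ
    rw [xbar_neg h hT φ f hθ.2, phit_eq h φ hθ]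
  -- key: the Picard integrand matches the integrand of the integral equation
  have key : ∀ (f : C(Icc (0:ℝ) T0, Esp n)) (z : ℝ → Esp n),
      (∀ r ∈ Icc (-τmax) T0, xbar h hT φ f r = z r) →
      (∀ θ ∈ Icc (-τmax) (0:ℝ), z θ = φ θ) →
      ∀ s ∈ Icc (0:ℝ) T0, Gfun h hT K τ F φ f s
        = F s (z s) (z (s - τ (z s) s)) (∫ u in (s - τmax)..s, K (s - u) • z u) := by
    intro f z hzeq hzφ s hs
    have hxs : xbar h hT φ f s = z s := hzeq s ⟨by linarith [hs.1], hs.2⟩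
    have hτv := hτb (z s) s
    have hdel_mem : s - τ (z s) s ∈ Icc (-τmax) (0:ℝ) :=
      ⟨by linarith [hτv.2, hs.1], by linarith [hτv.1, hs.2, hTτmin]⟩
    have hdel : phit τmax h φ (s - τ (z s) s) = z (s - τ (z s) s) := by
      rw [phit_eq h φ hdel_mem]
      exact (hzφ _ hdel_mem).symm
    have h2 := intervalIntegral.integral_comp_sub_left
      (a := 0) (b := τmax) (fun u => K (s - u) • z u) s
    simp only [sub_sub_cancel, sub_zero] at h2
    have h1 : (∫ v in (0:ℝ)..τmax, K v • xbar h hT φ f (s - v))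
        = ∫ v in (0:ℝ)..τmax, K v • z (s - v) := by
      apply intervalIntegral.integral_congr
      intro v hv
      rw [uIcc_of_le h0c] at hv
      simp only
      rw [hzeq (s - v) ⟨by linarith [hv.2, hs.1], by linarith [hv.1, hs.2]⟩]
    show F s (xbar h hT φ f s) (phit τmax h φ (s - τ (xbar h hT φ f s) s))
        (∫ v in (0:ℝ)..τmax, K v • xbar h hT φ f (s - v)) = _
    rw [hxs, hdel, h1, h2]
  refine ⟨T0, hT0pos, ⟨xbar h hT φ fS.1, ?_, hhist fS.1, ?_⟩, ?_⟩
  · exact (xbar_cont h hT hφc fS.1 fS.2).continuousOn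
  · -- the fixed point solves the integral equation
    intro t ht
    rw [xbar_mem h hT φ fS.1 fS.2 ht]
    conv_lhs => rw [← hfix]
    show Pmap h hT h0c hK hτc hFc hφc fS.1 fS.2 ⟨t, ht⟩ = _
    rw [Pmap_apply]
    congr 1
    apply intervalIntegral.integral_congr
    intro s hs
    rw [uIcc_of_le ht.1] at hs
    exact key fS.1 (xbar h hT φ fS.1) (fun r _ => rfl) (hhist fS.1) s ⟨hs.1, hs.2.trans ht.2⟩
  · -- uniqueness
    intro x y hx hy
    have hsub : Icc (0:ℝ) T0 ⊆ Icc (-τmax) T0 := Icc_subset_Icc (by linarith) le_rfl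
    have build : ∀ (x : ℝ → Esp n), IsIntSol τmax τ K F φ T0 x →
        ∃ fx : S, Function.IsFixedPt P fx ∧
          ∀ r ∈ Icc (-τmax) T0, xbar h hT φ fx.1 r = x r := by
      intro x hx
      have hx0 : x 0 = φ 0 := by
        have := hx.2.2 0 ⟨le_rfl, hT⟩
        simpa using this
      have hfxc : Continuous fun t : Icc (0:ℝ) T0 => x t :=
        hx.1.comp_continuous continuous_subtype_val (fun t => hsub t.2)
      set fx : C(Icc (0:ℝ) T0, Esp n) := ⟨fun t => x t, hfxc⟩ with hfxdef
      have hfx0 : fx ∈ S := hx0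
      have hxb : ∀ r ∈ Icc (-τmax) T0, xbar h hT φ fx r = x r := by
        intro r hr
        by_cases hr0 : r ≤ 0
        · rw [xbar_neg h hT φ fx hr0, phit_eq h φ ⟨hr.1, hr0⟩]
          exact (hx.2.1 r ⟨hr.1, hr0⟩).symm
        · have hm : r ∈ Icc (0:ℝ) T0 := ⟨(not_le.1 hr0).le, hr.2⟩
          rw [xbar_mem h hT φ fx hfx0 hm]
          rfl
      refine ⟨⟨fx, hfx0⟩, ?_, hxb⟩
      apply Subtype.ext
      apply ContinuousMap.ext
      intro t
      show Pmap h hT h0c hK hτc hFc hφc fx hfx0 t = fx t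
      rw [Pmap_apply]
      have heq := hx.2.2 (t:ℝ) ⟨t.2.1, t.2.2⟩
      show _ = x (t:ℝ)
      rw [heq]
      congr 1
      apply intervalIntegral.integral_congr
      intro s hs
      rw [uIcc_of_le t.2.1] at hs
      exact key fx x hxb hx.2.1 s ⟨hs.1, hs.2.trans t.2.2⟩
    obtain ⟨fxS, hfixx, hxb⟩ := build x hx
    obtain ⟨fyS, hfixy, hyb⟩ := build y hy
    have hEq : fxS = fyS := hcontr.fixedPoint_unique' hfixx hfixy
    intro r hr
    rw [← hxb r hr, ← hyb r hr, hEq]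
end

section
/- Continuous dependence on the initial history. Let n ≥ 1, 0 < τ_min ≤ τ_max, and let L₀, R₀ > 0. Let τ : ℝ^n × ℝ → ℝ be continuous with τ_min ≤ τ(u,s) ≤ τ_max and |τ(u,s) − τ(v,s)| ≤ L_τ·‖u − v‖; let K : ℝ → ℝ be integrable on [0, τ_max]; let F : ℝ × ℝ^n × ℝ^n × ℝ^n → ℝ^n be continuous with ‖F(s,u,v,w) − F(s,u',v',w')‖ ≤ L_F·(‖u−u'‖ + ‖v−v'‖ + ‖w−w'‖). Then there exist T₀ > 0 and C ≥ 0 such that for all initial histories φ, ψ : [−τ_max, 0] → ℝ^n that are Lipschitz with constant L₀ and bounded in supremum norm by R₀, and all continuous solutions x, y : [−τ_max, T₀] → ℝ^n of the integral equation x(t) = φ(0) + ∫_0^t F(s, x(s), x(s−τ(x(s),s)), M[x](s)) ds with x = φ on [−τ_max,0] (respectively with initial history ψ for y), one has sup_{t ∈ [−τ_max, T₀]} ‖x(t) − y(t)‖ ≤ C · sup_{θ ∈ [−τ_max, 0]} ‖φ(θ) − ψ(θ)‖. -/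
open MeasureTheory Set intervalIntegral
open scoped Interval

variable {E : Type*} [NormedAddCommGroup E] [NormedSpace ℝ E]

lemma memop_rw (τmax : ℝ) (K : ℝ → ℝ) (x : ℝ → E) (s : ℝ) :
    (∫ u in (s - τmax)..s, K (s - u) • x u) = ∫ v in (0:ℝ)..τmax, K v • x (s - v) := by
  have h := intervalIntegral.integral_comp_sub_left (a := 0) (b := τmax)
    (fun u => K (s - u) • x u) s
  simp only [sub_sub_cancel, sub_zero] at h
  exact h.symm

lemma memop_integrable (τmax T₀ : ℝ) (hτ : 0 ≤ τmax) (K : ℝ → ℝ)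
    (hK : IntervalIntegrable K volume 0 τmax) (x : ℝ → E)
    (hx : ContinuousOn x (Icc (-τmax) T₀)) {s : ℝ} (hs : s ∈ Icc (0:ℝ) T₀) :
    IntervalIntegrable (fun u => K (s - u) • x u) volume (s - τmax) s := by
  obtain ⟨B, hB⟩ := (isCompact_Icc : IsCompact (Icc (-τmax) T₀)).exists_bound_of_continuousOn hx
  have hKs : IntervalIntegrable (fun u => K (s - u)) volume (s - τmax) s := by
    simpa using (hK.comp_sub_left s).symm
  have hle : s - τmax ≤ s := by linarith
  rw [intervalIntegrable_iff_integrableOn_Ioc_of_le hle]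
  have hsub : Ioc (s - τmax) s ⊆ Icc (-τmax) T₀ := fun u hu =>
    ⟨by have := hu.1; linarith [hs.1], le_trans hu.2 hs.2⟩
  have hxm : AEStronglyMeasurable x (volume.restrict (Ioc (s - τmax) s)) :=
    ((hx.mono hsub).aestronglyMeasurable measurableSet_Ioc)
  have hKm : AEStronglyMeasurable (fun u => K (s - u)) (volume.restrict (Ioc (s - τmax) s)) :=
    ((intervalIntegrable_iff_integrableOn_Ioc_of_le hle).mp hKs).aestronglyMeasurable
  refine Integrable.mono' (g := fun u => |K (s - u)| * B) ?_ (hKm.smul hxm) ?_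
  · have : IntervalIntegrable (fun u => |K (s - u)| * B) volume (s - τmax) s :=
      hKs.norm.mul_const B
    rwa [intervalIntegrable_iff_integrableOn_Ioc_of_le hle] at this
  · refine (ae_restrict_iff' measurableSet_Ioc).2 (ae_of_all _ fun u hu => ?_)
    rw [norm_smul, Real.norm_eq_abs]
    exact mul_le_mul_of_nonneg_left (hB u (hsub hu)) (abs_nonneg _)

lemma memop_continuousOn (τmax T₀ : ℝ) (hτ : 0 ≤ τmax) (hT : 0 ≤ T₀) (K : ℝ → ℝ)
    (hK : IntervalIntegrable K volume 0 τmax) (x : ℝ → E)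
    (hx : ContinuousOn x (Icc (-τmax) T₀)) :
    ContinuousOn (fun s => ∫ u in (s - τmax)..s, K (s - u) • x u) (Icc (0:ℝ) T₀) := by
  obtain ⟨B, hB⟩ := (isCompact_Icc : IsCompact (Icc (-τmax) T₀)).exists_bound_of_continuousOn hx
  have heq : ∀ s, (∫ u in (s - τmax)..s, K (s - u) • x u)
      = ∫ v in (0:ℝ)..τmax, K v • x (s - v) := fun s => memop_rw τmax K x s
  simp only [heq]
  intro s₀ hs₀
  have hIoc : Ι (0:ℝ) τmax = Ioc 0 τmax := uIoc_of_le hτ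
  have hmem : ∀ σ ∈ Icc (0:ℝ) T₀, ∀ v ∈ Ioc (0:ℝ) τmax, σ - v ∈ Icc (-τmax) T₀ := by
    intro σ hσ v hv
    exact ⟨by have := hv.2; have := hσ.1; linarith, by have := hv.1; have := hσ.2; linarith⟩
  have hKm : AEStronglyMeasurable K (volume.restrict (Ioc (0:ℝ) τmax)) :=
    ((intervalIntegrable_iff_integrableOn_Ioc_of_le hτ).mp hK).aestronglyMeasurable
  refine intervalIntegral.continuousWithinAt_of_dominated_interval
    (bound := fun v => |K v| * B) ?_ ?_ (hK.norm.mul_const B) ?_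
  · filter_upwards [self_mem_nhdsWithin] with σ hσ
    rw [hIoc]
    have hmap : MapsTo (fun v => σ - v) (Ioc (0:ℝ) τmax) (Icc (-τmax) T₀) :=
      fun v hv => hmem σ hσ v hv
    exact hKm.smul ((hx.comp (continuousOn_const.sub continuousOn_id) hmap).aestronglyMeasurable
      measurableSet_Ioc)
  · filter_upwards [self_mem_nhdsWithin] with σ hσ
    refine ae_of_all _ fun v hv => ?_
    rw [hIoc] at hv
    rw [norm_smul, Real.norm_eq_abs]
    exact mul_le_mul_of_nonneg_left (hB _ (hmem σ hσ v hv)) (abs_nonneg _)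
  · refine ae_of_all _ fun v hv => ?_
    rw [hIoc] at hv
    refine ContinuousWithinAt.const_smul ?_ _
    have hmap : MapsTo (fun σ : ℝ => σ - v) (Icc (0:ℝ) T₀) (Icc (-τmax) T₀) :=
      fun σ hσ => hmem σ hσ v hv
    have h1 : ContinuousWithinAt (fun σ : ℝ => σ - v) (Icc (0:ℝ) T₀) s₀ :=
      (continuous_sub_right v).continuousWithinAt
    exact ContinuousWithinAt.comp (hx (s₀ - v) (hmap hs₀)) h1 hmap

set_option maxHeartbeats 1000000 in
/-- Continuous dependence on the initial history: there exist `T₀ > 0` and `C ≥ 0`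
such that any two solutions of the integral equation on `[−τ_max, T₀]` whose initial
histories are `L₀`-Lipschitz and bounded by `R₀` satisfy
`sup_{[−τ_max,T₀]} ‖x − y‖ ≤ C · sup_{[−τ_max,0]} ‖φ − ψ‖`. -/
theorem stmt_8 (n : ℕ) (hn : 1 ≤ n) (τmin τmax Lτ LF L₀ R₀ : ℝ)
    (hτmin : 0 < τmin) (hττ : τmin ≤ τmax) (hL₀ : 0 < L₀) (hR₀ : 0 < R₀)
    (τ : EuclideanSpace ℝ (Fin n) → ℝ → ℝ)
    (hτc : Continuous fun p : EuclideanSpace ℝ (Fin n) × ℝ => τ p.1 p.2)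
    (hτb : ∀ (u : EuclideanSpace ℝ (Fin n)) (s : ℝ), τ u s ∈ Icc τmin τmax)
    (hτL : ∀ (u v : EuclideanSpace ℝ (Fin n)) (s : ℝ), |τ u s - τ v s| ≤ Lτ * ‖u - v‖)
    (K : ℝ → ℝ) (hK : IntervalIntegrable K volume 0 τmax)
    (F : ℝ → EuclideanSpace ℝ (Fin n) → EuclideanSpace ℝ (Fin n) →
      EuclideanSpace ℝ (Fin n) → EuclideanSpace ℝ (Fin n))
    (hFc : Continuous fun p : ℝ × EuclideanSpace ℝ (Fin n) × EuclideanSpace ℝ (Fin n) ×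
      EuclideanSpace ℝ (Fin n) => F p.1 p.2.1 p.2.2.1 p.2.2.2)
    (hFL : ∀ (s : ℝ) (u v w u' v' w' : EuclideanSpace ℝ (Fin n)),
      ‖F s u v w - F s u' v' w'‖ ≤ LF * (‖u - u'‖ + ‖v - v'‖ + ‖w - w'‖)) :
    ∃ T₀ > 0, ∃ C ≥ (0 : ℝ),
      ∀ φ ψ x y : ℝ → EuclideanSpace ℝ (Fin n),
        (∀ a ∈ Icc (-τmax) (0 : ℝ), ∀ b ∈ Icc (-τmax) (0 : ℝ),
          ‖φ a - φ b‖ ≤ L₀ * |a - b|) →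
        (∀ a ∈ Icc (-τmax) (0 : ℝ), ∀ b ∈ Icc (-τmax) (0 : ℝ),
          ‖ψ a - ψ b‖ ≤ L₀ * |a - b|) →
        (∀ θ ∈ Icc (-τmax) (0 : ℝ), ‖φ θ‖ ≤ R₀) →
        (∀ θ ∈ Icc (-τmax) (0 : ℝ), ‖ψ θ‖ ≤ R₀) →
        IsIntSol τmax τ K F φ T₀ x → IsIntSol τmax τ K F ψ T₀ y →
        (⨆ t : Icc (-τmax) T₀, ‖x t.1 - y t.1‖) ≤
          C * ⨆ θ : Icc (-τmax) (0 : ℝ), ‖φ θ.1 - ψ θ.1‖ := by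
  have hτmax : 0 < τmax := lt_of_lt_of_le hτmin hττ
  -- nonnegativity of the Lipschitz constants
  set e := EuclideanSpace.single (⟨0, hn⟩ : Fin n) (1:ℝ) with he
  have henorm : ‖e - 0‖ = 1 := by
    rw [sub_zero, he, EuclideanSpace.norm_single]; norm_num
  have hLF : 0 ≤ LF := by
    have h := hFL 0 e 0 0 0 0 0
    rw [henorm, sub_zero, norm_zero] at h
    have h0 := norm_nonneg (F 0 e 0 0 - F 0 0 0 0)
    nlinarith
  have hLτ : 0 ≤ Lτ := by
    have h := hτL e 0 0
    rw [henorm, mul_one] at h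
    linarith [abs_nonneg (τ e 0 - τ 0 0)]
  -- constants
  set κ := ∫ v in (0:ℝ)..τmax, |K v| with hκdef
  have hκ : 0 ≤ κ := intervalIntegral.integral_nonneg hτmax.le fun u _ => abs_nonneg _
  set c₁ := LF * (1 + L₀ * Lτ + κ) with hc₁def
  have hc₁ : 0 ≤ c₁ := mul_nonneg hLF (by nlinarith)
  set T₀ := min τmin (1 / (2 * (c₁ + 1))) with hT₀def
  have hT₀pos : 0 < T₀ := lt_min hτmin (by positivity)
  have hT₀min : T₀ ≤ τmin := min_le_left _ _
  have hT₀c : T₀ * c₁ ≤ 1/2 := by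
    have h1 : T₀ ≤ 1 / (2 * (c₁ + 1)) := min_le_right _ _
    have h2 : 0 < 2 * (c₁ + 1) := by linarith
    rw [le_div_iff₀ h2] at h1
    nlinarith [hT₀pos.le]
  refine ⟨T₀, hT₀pos, 2 * (1 + T₀ * LF), by nlinarith [mul_nonneg hT₀pos.le hLF], ?_⟩
  intro φ ψ x y hφL hψL hφB hψB hxS hyS
  obtain ⟨hxc, hxh, hxe⟩ := hxS
  obtain ⟨hyc, hyh, hye⟩ := hyS
  have hIcc0 : (0:ℝ) ∈ Icc (-τmax) (0:ℝ) := ⟨by linarith, le_refl 0⟩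
  haveI hne : Nonempty (Icc (-τmax) (0:ℝ)) := ⟨⟨0, hIcc0⟩⟩
  haveI hneT : Nonempty (Icc (-τmax) T₀) := ⟨⟨0, ⟨by linarith, hT₀pos.le⟩⟩⟩
  set D := ⨆ θ : Icc (-τmax) (0:ℝ), ‖φ θ.1 - ψ θ.1‖ with hDdef
  have hDbdd : BddAbove (Set.range fun θ : Icc (-τmax) (0:ℝ) => ‖φ θ.1 - ψ θ.1‖) := by
    refine ⟨2 * R₀, ?_⟩
    rintro _ ⟨θ, rfl⟩
    calc ‖φ θ.1 - ψ θ.1‖ ≤ ‖φ θ.1‖ + ‖ψ θ.1‖ := norm_sub_le _ _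
      _ ≤ 2 * R₀ := by linarith [hφB θ.1 θ.2, hψB θ.1 θ.2]
  have hDle : ∀ θ ∈ Icc (-τmax) (0:ℝ), ‖φ θ - ψ θ‖ ≤ D := fun θ hθ =>
    le_ciSup hDbdd (⟨θ, hθ⟩ : Icc (-τmax) (0:ℝ))
  have hD0 : 0 ≤ D := le_trans (norm_nonneg _) (hDle 0 hIcc0)
  set G := ⨆ t : Icc (-τmax) T₀, ‖x t.1 - y t.1‖ with hGdef
  obtain ⟨Bx, hBx⟩ := (isCompact_Icc :
    IsCompact (Icc (-τmax) T₀)).exists_bound_of_continuousOn hxc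
  obtain ⟨By, hBy⟩ := (isCompact_Icc :
    IsCompact (Icc (-τmax) T₀)).exists_bound_of_continuousOn hyc
  have hGbdd : BddAbove (Set.range fun t : Icc (-τmax) T₀ => ‖x t.1 - y t.1‖) := by
    refine ⟨Bx + By, ?_⟩
    rintro _ ⟨t, rfl⟩
    calc ‖x t.1 - y t.1‖ ≤ ‖x t.1‖ + ‖y t.1‖ := norm_sub_le _ _
      _ ≤ Bx + By := add_le_add (hBx t.1 t.2) (hBy t.1 t.2)
  have hGle : ∀ t ∈ Icc (-τmax) T₀, ‖x t - y t‖ ≤ G := fun t ht =>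
    le_ciSup hGbdd (⟨t, ht⟩ : Icc (-τmax) T₀)
  have hG0 : 0 ≤ G := le_trans (norm_nonneg _) (hGle 0 ⟨by linarith, hT₀pos.le⟩)
  -- memory term difference
  have hMdiff : ∀ s ∈ Icc (0:ℝ) T₀,
      ‖(∫ u in (s - τmax)..s, K (s - u) • x u) - ∫ u in (s - τmax)..s, K (s - u) • y u‖
        ≤ κ * G := by
    intro s hs
    have hIx := memop_integrable τmax T₀ hτmax.le K hK x hxc hs
    have hIy := memop_integrable τmax T₀ hτmax.le K hK y hyc hs
    rw [← intervalIntegral.integral_sub hIx hIy]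
    have hKs : IntervalIntegrable (fun u => K (s - u)) volume (s - τmax) s := by
      simpa using (hK.comp_sub_left s).symm
    have hsle : s - τmax ≤ s := by linarith [hs.1]
    have hsub : Ι (s - τmax) s ⊆ Icc (-τmax) T₀ := by
      rw [uIoc_of_le hsle]
      exact fun u hu => ⟨by have := hu.1; linarith [hs.1], le_trans hu.2 hs.2⟩
    have hptw : ∀ᵐ u ∂(volume.restrict (Ι (s - τmax) s)),
        ‖K (s - u) • x u - K (s - u) • y u‖ ≤ |K (s - u)| * G := by
      refine (ae_restrict_iff' measurableSet_uIoc).2 (ae_of_all _ fun u hu => ?_)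
      rw [← smul_sub, norm_smul, Real.norm_eq_abs]
      exact mul_le_mul_of_nonneg_left (hGle u (hsub hu)) (abs_nonneg _)
    have hbd := intervalIntegral.norm_integral_le_abs_of_norm_le hptw (hKs.norm.mul_const G)
    refine le_trans hbd ?_
    have h2 : (∫ u in (s - τmax)..s, |K (s - u)| * G) = κ * G := by
      rw [intervalIntegral.integral_mul_const]
      have h3 := intervalIntegral.integral_comp_sub_left (a := s - τmax) (b := s)
        (fun v => |K v|) s
      simp only [sub_self, sub_sub_cancel] at h3
      rw [h3, hκdef]
    rw [h2, abs_of_nonneg (mul_nonneg hκ hG0)]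
  -- delayed term difference
  have hdelay : ∀ s ∈ Icc (0:ℝ) T₀,
      ‖x (s - τ (x s) s) - y (s - τ (y s) s)‖ ≤ L₀ * (Lτ * G) + D := by
    intro s hs
    have hτx := hτb (x s) s
    have hτy := hτb (y s) s
    have ha : s - τ (x s) s ∈ Icc (-τmax) (0:ℝ) :=
      ⟨by linarith [hs.1, hτx.2], by linarith [hs.2, hτx.1, hT₀min]⟩
    have hb : s - τ (y s) s ∈ Icc (-τmax) (0:ℝ) :=
      ⟨by linarith [hs.1, hτy.2], by linarith [hs.2, hτy.1, hT₀min]⟩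
    rw [hxh _ ha, hyh _ hb]
    have tri : ‖φ (s - τ (x s) s) - ψ (s - τ (y s) s)‖
        ≤ ‖φ (s - τ (x s) s) - φ (s - τ (y s) s)‖
          + ‖φ (s - τ (y s) s) - ψ (s - τ (y s) s)‖ := by
      simpa [sub_add_sub_cancel] using norm_add_le
        (φ (s - τ (x s) s) - φ (s - τ (y s) s)) (φ (s - τ (y s) s) - ψ (s - τ (y s) s))
    have h1 : ‖φ (s - τ (x s) s) - φ (s - τ (y s) s)‖ ≤ L₀ * (Lτ * G) := by
      refine le_trans (hφL _ ha _ hb) ?_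
      have habs : |s - τ (x s) s - (s - τ (y s) s)| = |τ (x s) s - τ (y s) s| := by
        rw [abs_sub_comm]; ring_nf
      rw [habs]
      refine mul_le_mul_of_nonneg_left (le_trans (hτL (x s) (y s) s) ?_) hL₀.le
      exact mul_le_mul_of_nonneg_left (hGle s ⟨by linarith [hs.1], hs.2⟩) hLτ
    have h2 : ‖φ (s - τ (y s) s) - ψ (s - τ (y s) s)‖ ≤ D := hDle _ hb
    linarith
  -- continuity of the integrand
  have hconts : ∀ z : ℝ → EuclideanSpace ℝ (Fin n), ContinuousOn z (Icc (-τmax) T₀) →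
      ContinuousOn (fun s => F s (z s) (z (s - τ (z s) s))
        (∫ u in (s - τmax)..s, K (s - u) • z u)) (Icc (0:ℝ) T₀) := by
    intro z hz
    have hsub0 : Icc (0:ℝ) T₀ ⊆ Icc (-τmax) T₀ := Icc_subset_Icc (by linarith) le_rfl
    have hz0 : ContinuousOn z (Icc (0:ℝ) T₀) := hz.mono hsub0
    have hτz : ContinuousOn (fun s => τ (z s) s) (Icc (0:ℝ) T₀) :=
      hτc.comp_continuousOn (hz0.prodMk continuousOn_id)
    have hσ : ContinuousOn (fun s => s - τ (z s) s) (Icc (0:ℝ) T₀) :=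
      continuousOn_id.sub hτz
    have hmap : MapsTo (fun s => s - τ (z s) s) (Icc (0:ℝ) T₀) (Icc (-τmax) T₀) := by
      intro s hs
      have h := hτb (z s) s
      simp only [mem_Icc] at *
      exact ⟨by linarith [hs.1, h.2], by linarith [hs.2, h.1, hτmin]⟩
    have hzσ : ContinuousOn (fun s => z (s - τ (z s) s)) (Icc (0:ℝ) T₀) :=
      hz.comp hσ hmap
    have hM := memop_continuousOn τmax T₀ hτmax.le hT₀pos.le K hK z hz
    exact hFc.comp_continuousOn (continuousOn_id.prodMk (hz0.prodMk (hzσ.prodMk hM)))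
  -- the key pointwise estimate
  have key : ∀ t ∈ Icc (-τmax) T₀, ‖x t - y t‖ ≤ (1 + T₀ * LF) * D + G / 2 := by
    intro t ht
    rcases le_or_gt t 0 with h | h
    · have htm : t ∈ Icc (-τmax) (0:ℝ) := ⟨ht.1, h⟩
      rw [hxh t htm, hyh t htm]
      have := hDle t htm
      nlinarith [mul_nonneg (mul_nonneg hT₀pos.le hLF) hD0]
    · have ht0 : t ∈ Icc (0:ℝ) T₀ := ⟨h.le, ht.2⟩
      rw [hxe t ht0, hye t ht0]
      set f := fun s => F s (x s) (x (s - τ (x s) s))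
        (∫ u in (s - τmax)..s, K (s - u) • x u) with hfdef
      set g := fun s => F s (y s) (y (s - τ (y s) s))
        (∫ u in (s - τmax)..s, K (s - u) • y u) with hgdef
      have hfI : IntervalIntegrable f volume 0 t := by
        apply ContinuousOn.intervalIntegrable
        rw [uIcc_of_le h.le]
        exact (hconts x hxc).mono (Icc_subset_Icc le_rfl ht.2)
      have hgI : IntervalIntegrable g volume 0 t := by
        apply ContinuousOn.intervalIntegrable
        rw [uIcc_of_le h.le]
        exact (hconts y hyc).mono (Icc_subset_Icc le_rfl ht.2)
      have heq : φ 0 + (∫ s in (0:ℝ)..t, f s) - (ψ 0 + ∫ s in (0:ℝ)..t, g s)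
          = (φ 0 - ψ 0) + ∫ s in (0:ℝ)..t, (f s - g s) := by
        rw [intervalIntegral.integral_sub hfI hgI]; abel
      rw [heq]
      have hptw : ∀ s ∈ Ι (0:ℝ) t, ‖f s - g s‖ ≤ c₁ * G + LF * D := by
        intro s hs'
        rw [uIoc_of_le h.le] at hs'
        have hs : s ∈ Icc (0:ℝ) T₀ := ⟨hs'.1.le, le_trans hs'.2 ht.2⟩
        have h1 : ‖x s - y s‖ ≤ G := hGle s ⟨by linarith [hs.1], hs.2⟩
        have h2 := hdelay s hs
        have h3 := hMdiff s hs
        have h4 := hFL s (x s) (x (s - τ (x s) s))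
          (∫ u in (s - τmax)..s, K (s - u) • x u) (y s) (y (s - τ (y s) s))
          (∫ u in (s - τmax)..s, K (s - u) • y u)
        calc ‖f s - g s‖
            ≤ LF * (‖x s - y s‖ + ‖x (s - τ (x s) s) - y (s - τ (y s) s)‖
              + ‖(∫ u in (s - τmax)..s, K (s - u) • x u)
                 - ∫ u in (s - τmax)..s, K (s - u) • y u‖) := h4
          _ ≤ LF * ((1 + L₀ * Lτ + κ) * G + D) :=
              mul_le_mul_of_nonneg_left (by linarith) hLF
          _ = c₁ * G + LF * D := by rw [hc₁def]; ring
      have hint : ‖∫ s in (0:ℝ)..t, (f s - g s)‖ ≤ (c₁ * G + LF * D) * |t - 0| :=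
        intervalIntegral.norm_integral_le_of_norm_le_const hptw
      rw [sub_zero, abs_of_pos h] at hint
      have hDφψ : ‖φ 0 - ψ 0‖ ≤ D := hDle 0 hIcc0
      have htT : t ≤ T₀ := ht.2
      calc ‖(φ 0 - ψ 0) + ∫ s in (0:ℝ)..t, (f s - g s)‖
          ≤ ‖φ 0 - ψ 0‖ + ‖∫ s in (0:ℝ)..t, (f s - g s)‖ := norm_add_le _ _
        _ ≤ D + (c₁ * G + LF * D) * t := add_le_add hDφψ hint
        _ = D + c₁ * G * t + LF * D * t := by ring
        _ ≤ (1 + T₀ * LF) * D + G / 2 := by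
            have p1 : c₁ * G * t ≤ c₁ * G * T₀ :=
              mul_le_mul_of_nonneg_left htT (mul_nonneg hc₁ hG0)
            have p2 : LF * D * t ≤ LF * D * T₀ :=
              mul_le_mul_of_nonneg_left htT (mul_nonneg hLF hD0)
            have p3 : T₀ * c₁ * G ≤ 1 / 2 * G :=
              mul_le_mul_of_nonneg_right hT₀c hG0
            nlinarith
  have hGle2 : G ≤ (1 + T₀ * LF) * D + G / 2 := ciSup_le fun t => key t.1 t.2
  have hfin : 2 * (1 + T₀ * LF) * D = 2 * ((1 + T₀ * LF) * D) := by ring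
  rw [hfin]
  linarith
end
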